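/- In a topological space X, every e*-θ-open set coincides with being e*-regular (i.e., e*θO(X) = e*R(X)) if and only if e*-cl_θ(A) is e*-regular for every subset A of X. -/
import Mathlib


open Set Topology

variable {X : Type*} [TopologicalSpace X]

/-- δ-closure of A. -/
def deltaCl (A : Set X) : Set X :=
  {x | ∀ U : Set X, IsOpen U → x ∈ U → (interior (closure U) ∩ A).Nonempty}

/-- A is e*-open if A ⊆ cl(int(δ-cl A)). -/
def EStarOpen (A : Set X) : Prop := A ⊆ closure (interior (deltaCl A))

/-- A is e*-closed if its complement is e*-open. -/
def EStarClosed (A : Set X) : Prop := EStarOpen Aᶜ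

/-- e*-closure: intersection of all e*-closed supersets. -/
def eStarCl (A : Set X) : Set X := ⋂₀ {F | EStarClosed F ∧ A ⊆ F}

/-- e*-interior: union of all e*-open subsets. -/
def eStarInt (A : Set X) : Set X := ⋃₀ {U | EStarOpen U ∧ U ⊆ A}

/-- e*-regular: both e*-open and e*-closed. -/
def EStarRegular (A : Set X) : Prop := EStarOpen A ∧ EStarClosed A

/-- e*-θ-closure. -/
def eStarClTheta (A : Set X) : Set X :=
  {x | ∀ U : Set X, EStarOpen U → x ∈ U → (eStarCl U ∩ A).Nonempty}

/-- e*-θ-closed. -/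
def EStarThetaClosed (A : Set X) : Prop := A = eStarClTheta A

/-- e*-θ-open. -/
def EStarThetaOpen (A : Set X) : Prop := EStarThetaClosed Aᶜ

/-- quasi e*-θ-closed. -/
def QEStarThetaClosed (A : Set X) : Prop :=
  ∀ U : Set X, EStarThetaOpen U → A ⊆ U → eStarClTheta A ⊆ U

/-- e*-θ-kernel. -/
def eStarKerTheta (A : Set X) : Set X := ⋂₀ {U | EStarThetaOpen U ∧ A ⊆ U}

lemma deltaCl_mono {A B : Set X} (h : A ⊆ B) : deltaCl A ⊆ deltaCl B := by
  intro x hx U hUo hxU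
  exact (hx U hUo hxU).mono (inter_subset_inter_right _ h)

lemma subset_deltaCl (A : Set X) : A ⊆ deltaCl A := by
  intro x hx U hUo hxU
  exact ⟨x, interior_maximal subset_closure hUo hxU, hx⟩

lemma clIntDelta_mono {A B : Set X} (h : A ⊆ B) :
    closure (interior (deltaCl A)) ⊆ closure (interior (deltaCl B)) :=
  closure_mono (interior_mono (deltaCl_mono h))

lemma IsOpen.eStarOpen {V : Set X} (hV : IsOpen V) : EStarOpen V := by
  intro x hx
  exact subset_closure (interior_maximal (subset_deltaCl V) hV hx)

lemma eStarClosed_closure (T : Set X) : EStarClosed (closure T) := by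
  have : ((closure T)ᶜ : Set X) = interior Tᶜ := (interior_compl).symm
  unfold EStarClosed
  rw [this]
  exact isOpen_interior.eStarOpen

lemma subset_eStarCl (A : Set X) : A ⊆ eStarCl A :=
  subset_sInter fun _ hF => hF.2

lemma eStarCl_subset_of {A F : Set X} (hF : EStarClosed F) (h : A ⊆ F) :
    eStarCl A ⊆ F :=
  sInter_subset_of_mem ⟨hF, h⟩

lemma eStarCl_eq_of_closed {A : Set X} (h : EStarClosed A) : eStarCl A = A :=
  Subset.antisymm (eStarCl_subset_of h subset_rfl) (subset_eStarCl A)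

lemma eStarOpen_of_nbhds {A : Set X}
    (h : ∀ x ∈ A, ∃ U, EStarOpen U ∧ x ∈ U ∧ U ⊆ A) : EStarOpen A := by
  intro x hx
  obtain ⟨U, hU, hxU, hUA⟩ := h x hx
  exact clIntDelta_mono hUA (hU hxU)

lemma eStarClosed_eStarCl (A : Set X) : EStarClosed (eStarCl A) := by
  apply eStarOpen_of_nbhds
  intro x hx
  rw [mem_compl_iff, eStarCl, mem_sInter] at hx
  push_neg at hx
  obtain ⟨F, ⟨hFc, hAF⟩, hxF⟩ := hx
  exact ⟨Fᶜ, hFc, hxF, compl_subset_compl.mpr (eStarCl_subset_of hFc hAF)⟩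

lemma eStarOpen_eStarCl {U : Set X} (hU : EStarOpen U) : EStarOpen (eStarCl U) := by
  intro x hx
  have h1 : eStarCl U ⊆ closure (interior (deltaCl U)) :=
    eStarCl_subset_of (eStarClosed_closure _) hU
  exact clIntDelta_mono (subset_eStarCl U) (h1 hx)

lemma subset_eStarClTheta (A : Set X) : A ⊆ eStarClTheta A :=
  fun x hx U _ hxU => ⟨x, subset_eStarCl U hxU, hx⟩

lemma eStarClTheta_idem (A : Set X) :
    eStarClTheta (eStarClTheta A) = eStarClTheta A := by
  apply Subset.antisymm
  · intro x hx U hU hxU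
    obtain ⟨y, hyU, hyA⟩ := hx U hU hxU
    have := hyA (eStarCl U) (eStarOpen_eStarCl hU) hyU
    rwa [eStarCl_eq_of_closed (eStarClosed_eStarCl U)] at this
  · exact subset_eStarClTheta _

lemma eStarRegular_compl {A : Set X} (h : EStarRegular A) : EStarRegular Aᶜ := by
  refine ⟨h.2, ?_⟩
  unfold EStarClosed
  rw [compl_compl]
  exact h.1

theorem stmt11 :
    (∀ A : Set X, EStarThetaOpen A ↔ EStarRegular A) ↔
    (∀ A : Set X, EStarRegular (eStarClTheta A)) := by
  constructor
  · intro h A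
    have hB : EStarThetaOpen (eStarClTheta A)ᶜ := by
      unfold EStarThetaOpen EStarThetaClosed
      rw [compl_compl]
      exact (eStarClTheta_idem A).symm
    have hreg := (h _).mp hB
    have := eStarRegular_compl hreg
    rwa [compl_compl] at this
  · intro h A
    constructor
    · intro hA
      have hreg := h Aᶜ
      rw [← hA] at hreg
      have := eStarRegular_compl hreg
      rwa [compl_compl] at this
    · intro hA
      unfold EStarThetaOpen EStarThetaClosed
      apply Subset.antisymm (subset_eStarClTheta _)
      intro x hx
      by_contra hxA
      have hxA' : x ∈ A := not_not.mp hxA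
      obtain ⟨y, hy1, hy2⟩ := hx A hA.1 hxA'
      rw [eStarCl_eq_of_closed hA.2] at hy1
      exact hy2 hy1
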